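/- Let G be a connected undirected graph containing a cycle, which is not arbitrarily regularizable. Then the system Bw = re has infinitely many solutions with w ≠ 0 and r = 0. -/

import Mathlib

open Matrix BigOperators

/-- An undirected graph is arbitrarily regularizable if there is a real weighting of its
edges, not identically zero, and `r > 0`, such that `B w = r e` where `B` is the
incidence matrix. -/
def ArbReg {V : Type*} [Fintype V] [DecidableEq V] (G : SimpleGraph V) : Prop :=
  ∃ (w : Sym2 V → ℝ) (r : ℝ), 0 < r ∧ w ≠ 0 ∧ (∀ e ∉ G.edgeSet, w e = 0) ∧
    (haveI := Classical.decRel G.Adj; G.incMatrix ℝ) *ᵥ w = fun _ => r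

section Aux

variable {V : Type*} [Fintype V] [DecidableEq V] {G : SimpleGraph V} [DecidableRel G.Adj]

/-- characteristic vector of a vertex -/
noncomputable def chi (a : V) : V → ℝ := fun i => if i = a then 1 else 0

/-- alternating edge-weight vector along a walk -/
noncomputable def wvec : {a b : V} → G.Walk a b → Sym2 V → ℝ
  | _, _, SimpleGraph.Walk.nil => 0
  | _, _, SimpleGraph.Walk.cons (u := a) (v := x) _ p =>
      (fun e => if e = s(a, x) then 1 else 0) - wvec p

lemma wvec_nil {a : V} : wvec (SimpleGraph.Walk.nil : G.Walk a a) = 0 := rfl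

lemma wvec_cons {a x b : V} (h : G.Adj a x) (p : G.Walk x b) :
    wvec (SimpleGraph.Walk.cons h p) = (fun e => if e = s(a, x) then 1 else 0) - wvec p := rfl

lemma wvec_eq_zero_of_not_mem_edges {a b : V} (p : G.Walk a b) {e : Sym2 V}
    (he : e ∉ p.edges) : wvec p e = 0 := by
  induction p with
  | nil => rfl
  | cons h q ih =>
    rw [SimpleGraph.Walk.edges_cons, List.mem_cons, not_or] at he
    simp [wvec_cons, he.1, ih he.2]

lemma wvec_support {a b : V} (p : G.Walk a b) {e : Sym2 V} (he : e ∉ G.edgeSet) :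
    wvec p e = 0 :=
  wvec_eq_zero_of_not_mem_edges p (fun hm => he (p.edges_subset_edgeSet hm))

lemma mulVec_wvec {a b : V} (p : G.Walk a b) :
    G.incMatrix ℝ *ᵥ wvec p = chi a - ((-1 : ℝ) ^ p.length) • chi b := by
  induction p with
  | nil => simp [wvec_nil, mulVec_zero, chi]
  | @cons a x b h q ih =>
    have hax : a ≠ x := G.ne_of_adj h
    have hcol : G.incMatrix ℝ *ᵥ (fun e => if e = s(a, x) then (1 : ℝ) else 0)
        = chi a + chi x := by
      funext i
      rw [mulVec]
      simp only [dotProduct, mul_ite, mul_one, mul_zero]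
      rw [Finset.sum_ite_eq' Finset.univ (s(a, x)) (fun e => G.incMatrix ℝ i e)]
      simp only [Finset.mem_univ, if_true]
      by_cases hia : i = a
      · subst hia
        rw [(SimpleGraph.incMatrix_apply_eq_one_iff (R := ℝ) G).2
          (G.mk'_mem_incidenceSet_left_iff.2 h)]
        simp [chi, hax]
      · by_cases hix : i = x
        · subst hix
          rw [(SimpleGraph.incMatrix_apply_eq_one_iff (R := ℝ) G).2
            (G.mk'_mem_incidenceSet_right_iff.2 h)]
          simp [chi, hia]
        · rw [(SimpleGraph.incMatrix_apply_eq_zero_iff (R := ℝ) G).2]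
          · simp [chi, hia, hix]
          · rw [SimpleGraph.mk'_mem_incidenceSet_iff]
            rintro ⟨-, rfl | rfl⟩ <;> simp_all
    rw [wvec_cons, mulVec_sub, hcol, ih]
    funext i
    simp only [Pi.sub_apply, Pi.add_apply, Pi.smul_apply, SimpleGraph.Walk.length_cons,
      pow_succ, smul_eq_mul]
    ring

end Aux

/-- For a connected cyclic graph that is not arbitrarily regularizable, the system
`B w = r e` has infinitely many solutions with `w ≠ 0` and `r = 0`. -/
theorem cyclic_not_arb_reg_infinitely_many_null_solutions
    {V : Type*} [Fintype V] [DecidableEq V] (G : SimpleGraph V)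
    (hc : G.Connected) (hcy : ¬ G.IsAcyclic) (hnr : ¬ ArbReg G) :
    {w : Sym2 V → ℝ | w ≠ 0 ∧ (∀ e ∉ G.edgeSet, w e = 0) ∧
      (haveI := Classical.decRel G.Adj; G.incMatrix ℝ) *ᵥ w = fun _ => (0 : ℝ)}.Infinite := by
  classical
  simp only [SimpleGraph.IsAcyclic, not_forall, not_not] at hcy
  obtain ⟨v, c, hcyc⟩ := hcy
  rcases Nat.even_or_odd c.length with hev | hodd
  · -- even cycle: alternating vector is in the kernel and nonzero
    have hker : G.incMatrix ℝ *ᵥ wvec c = fun _ => (0 : ℝ) := by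
      rw [mulVec_wvec, hev.neg_one_pow]
      funext i; simp
    -- wvec c is nonzero at the first edge
    obtain ⟨x, h, p, rfl⟩ : ∃ (x : V) (h : G.Adj v x) (p : G.Walk x v),
        c = SimpleGraph.Walk.cons h p := by
      cases c with
      | nil => exact absurd rfl hcyc.ne_nil
      | cons h p => exact ⟨_, h, p, rfl⟩
    have hnodup := hcyc.isTrail.edges_nodup
    rw [SimpleGraph.Walk.edges_cons, List.nodup_cons] at hnodup
    have hone : wvec (SimpleGraph.Walk.cons h p) s(v, x) = 1 := by
      rw [wvec_cons]
      simp [wvec_eq_zero_of_not_mem_edges p hnodup.1]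
    set w := wvec (SimpleGraph.Walk.cons h p) with hw
    apply Set.infinite_of_injective_forall_mem
      (f := fun n : ℕ => ((n : ℝ) + 1) • w) ?_ ?_
    · intro m n hmn
      have h1 := congrFun hmn s(v, x)
      simp only [Pi.smul_apply, hone, smul_eq_mul, mul_one] at h1
      have h2 : (m : ℝ) = n := by linarith
      exact_mod_cast h2
    · intro n
      refine ⟨?_, ?_, ?_⟩
      · intro h0
        have h1 := congrFun h0 s(v, x)
        simp only [Pi.smul_apply, hone, smul_eq_mul, mul_one, Pi.zero_apply] at h1
        have h2 : (0 : ℝ) < (n : ℝ) + 1 := by positivity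
        linarith
      · intro e he
        have hz : w e = 0 := wvec_support _ he
        simp [Pi.smul_apply, hz]
      · rw [mulVec_smul, hker]
        funext i; simp
  · -- odd cycle: G is arbitrarily regularizable, contradiction
    exfalso
    apply hnr
    have hV : Nonempty V := hc.nonempty
    let p : ∀ u : V, G.Walk v u := fun u => (hc.preconnected v u).some
    let W : Sym2 V → ℝ :=
      ∑ u : V, ((-1 : ℝ) ^ (p u).length) • ((2⁻¹ : ℝ) • wvec c - wvec (p u))
    have hBW : G.incMatrix ℝ *ᵥ W = fun _ => (1 : ℝ) := by
      have hterm : ∀ u : V,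
          G.incMatrix ℝ *ᵥ (((-1 : ℝ) ^ (p u).length) •
            ((2⁻¹ : ℝ) • wvec c - wvec (p u))) = chi u := by
        intro u
        rw [mulVec_smul, mulVec_sub, mulVec_smul, mulVec_wvec, mulVec_wvec,
          hodd.neg_one_pow]
        funext i
        have h1 : ((-1 : ℝ) ^ (p u).length) * ((-1 : ℝ) ^ (p u).length) = 1 := by
          rw [← pow_add]
          exact Even.neg_one_pow ⟨(p u).length, rfl⟩
        simp only [Pi.smul_apply, Pi.sub_apply, smul_eq_mul]
        linear_combination chi u i * h1
      have : G.incMatrix ℝ *ᵥ W = ∑ u : V, chi u := by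
        unfold W
        rw [show G.incMatrix ℝ *ᵥ (∑ u : V, ((-1 : ℝ) ^ (p u).length) •
            ((2⁻¹ : ℝ) • wvec c - wvec (p u)))
          = (G.incMatrix ℝ).mulVecLin (∑ u : V, ((-1 : ℝ) ^ (p u).length) •
            ((2⁻¹ : ℝ) • wvec c - wvec (p u))) from (Matrix.mulVecLin_apply _ _).symm,
          map_sum]
        refine Finset.sum_congr rfl fun u _ => ?_
        rw [Matrix.mulVecLin_apply]
        exact hterm u
      rw [this]
      funext i
      simp [chi, Finset.sum_ite_eq']
    refine ⟨W, 1, one_pos, ?_, ?_, hBW⟩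
    · intro h0
      have := congrFun hBW (Classical.arbitrary V)
      rw [h0] at this
      simp at this
    · intro e he
      unfold W
      simp only [Finset.sum_apply, Pi.smul_apply, Pi.sub_apply, smul_eq_mul]
      refine Finset.sum_eq_zero fun u _ => ?_
      rw [wvec_support _ he, wvec_support _ he]
      simp
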